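/- In a many-to-one stable matching market, any institution that is undersubscribed (filled below capacity) in some stable matching is assigned exactly the same set of students in every stable matching. -/

import Mathlib

open Finset

/-- A (many-to-one) matching market: acceptability edges, capacities, and
rank functions encoding strict preferences (lower rank = more preferred). -/
structure Market (S I : Type*) where
  E : Finset (S × I)
  q : I → ℕ
  prefS : S → I → ℕ
  prefI : I → S → ℕ

variable {S I : Type*} [DecidableEq S] [DecidableEq I]

/-- The edges of `M` incident to institution `i`. -/
def edgesOf (M : Finset (S × I)) (i : I) : Finset (S × I) :=
  M.filter (fun e => e.2 = i)

/-- The set of students assigned to institution `i` under `M`. -/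
def assigned (M : Finset (S × I)) (i : I) : Finset S :=
  (edgesOf M i).image Prod.fst

/-- `M` is a matching: it uses acceptable edges, each student is matched at most
once, and each institution `i` is matched to at most `q i` students. -/
def IsMatching (mkt : Market S I) (M : Finset (S × I)) : Prop :=
  M ⊆ mkt.E ∧ (∀ s : S, (M.filter (fun e => e.1 = s)).card ≤ 1) ∧
    ∀ i : I, (edgesOf M i).card ≤ mkt.q i

/-- `(s, i)` blocks `M`: it is an acceptable non-matching pair, `s` strictly prefers
`i` to her assignment (being unmatched is worst), and `i` has a free seat or a
student it likes strictly less than `s`. -/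
def Blocks (mkt : Market S I) (M : Finset (S × I)) (s : S) (i : I) : Prop :=
  (s, i) ∈ mkt.E ∧ (s, i) ∉ M ∧
    (∀ i' : I, (s, i') ∈ M → mkt.prefS s i < mkt.prefS s i') ∧
    ((edgesOf M i).card < mkt.q i ∨ ∃ s' ∈ assigned M i, mkt.prefI i s < mkt.prefI i s')

/-- A stable matching admits no blocking pair. -/
def IsStable (mkt : Market S I) (M : Finset (S × I)) : Prop :=
  IsMatching mkt M ∧ ∀ s i, ¬ Blocks mkt M s i

/-! ### Auxiliary machinery for the rural hospitals theorem -/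

set_option linter.unusedSectionVars false

lemma pair_eta {e : S × I} {i : I} (hei : e.2 = i) : (e.1, i) = e := by
  rw [← hei]

section Aux

variable [Fintype I]

/-- Edges `(s,i)` of `M \ M'` such that `s` strictly prefers `i` to her
assignment (if any) under `M'`. -/
noncomputable def Xset (mkt : Market S I) (M M' : Finset (S × I)) : Finset (S × I) :=
  (M \ M').filter (fun e => ∀ j, (e.1, j) ∈ M' → mkt.prefS e.1 e.2 < mkt.prefS e.1 j)

lemma mem_Xset {mkt : Market S I} {M M' : Finset (S × I)} {e : S × I} :
    e ∈ Xset mkt M M' ↔ e ∈ M ∧ e ∉ M' ∧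
      ∀ j, (e.1, j) ∈ M' → mkt.prefS e.1 e.2 < mkt.prefS e.1 j := by
  simp [Xset, mem_filter, mem_sdiff, and_assoc]

lemma partner_unique {mkt : Market S I} {M : Finset (S × I)} (hM : IsMatching mkt M)
    {s : S} {i i' : I} (h1 : (s, i) ∈ M) (h2 : (s, i') ∈ M) : i = i' := by
  have hc := hM.2.1 s
  have := Finset.card_le_one.mp hc (s, i) (by simp [h1]) (s, i') (by simp [h2])
  exact congrArg Prod.snd this

/-- Main consequence of stability: if `s` has an acceptable edge to `i` not in `M'`
and prefers `i` to all her `M'`-partners, then `i` is full under `M'` and prefers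
all its `M'`-students to `s`. -/
lemma stable_cons {mkt : Market S I} {M' : Finset (S × I)} (hM' : IsStable mkt M')
    {s : S} {i : I} (hE : (s, i) ∈ mkt.E) (hnm : (s, i) ∉ M')
    (hpref : ∀ j, (s, j) ∈ M' → mkt.prefS s i < mkt.prefS s j) :
    (edgesOf M' i).card = mkt.q i ∧
      ∀ t ∈ assigned M' i, mkt.prefI i t ≤ mkt.prefI i s := by
  have h := hM'.2 s i
  simp only [Blocks] at h
  push_neg at h
  obtain ⟨h1, h2⟩ := h hE hnm hpref
  exact ⟨le_antisymm (hM'.1.2.2 i) h1, h2⟩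

/-- Repackaged membership in `edgesOf (Xset ...) i`. -/
lemma X_edge_facts {mkt : Market S I} {M M' : Finset (S × I)} {e : S × I} {i : I}
    (he : e ∈ edgesOf (Xset mkt M M') i) :
    (e.1, i) ∈ M ∧ (e.1, i) ∉ M' ∧
      ∀ j, (e.1, j) ∈ M' → mkt.prefS e.1 i < mkt.prefS e.1 j := by
  simp only [edgesOf, mem_filter] at he
  obtain ⟨heX, hei⟩ := he
  rw [mem_Xset] at heX
  obtain ⟨heM, henM', hepref⟩ := heX
  rw [← hei]
  refine ⟨?_, ?_, ?_⟩
  · rw [pair_eta rfl]; exact heM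
  · rw [pair_eta rfl]; exact henM'
  · exact hepref

lemma edgesOf_sdiff (M N : Finset (S × I)) (i : I) :
    edgesOf (M \ N) i = edgesOf M i \ edgesOf N i := by
  ext e
  simp only [edgesOf, mem_filter, mem_sdiff]
  tauto

lemma edgesOf_subset {M N : Finset (S × I)} (h : M ⊆ N) (i : I) :
    edgesOf M i ⊆ edgesOf N i := Finset.filter_subset_filter _ h

lemma Xset_subset (mkt : Market S I) (M M' : Finset (S × I)) :
    Xset mkt M M' ⊆ M \ M' := Finset.filter_subset _ _

lemma mem_assigned {M : Finset (S × I)} {s : S} {i : I} (h : (s, i) ∈ M) :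
    s ∈ assigned M i := by
  apply Finset.mem_image.mpr
  exact ⟨(s, i), by simp [edgesOf, h], rfl⟩

/-- If `i` is incident to an `X`-edge (a student preferring `M` there), it cannot be
incident to a `Y`-edge (a student preferring `M'` there). -/
lemma dichotomy {mkt : Market S I}
    (hstrictI : ∀ i, Function.Injective (mkt.prefI i))
    {M M' : Finset (S × I)} (hM : IsStable mkt M) (hM' : IsStable mkt M') {i : I}
    (hx : (edgesOf (Xset mkt M M') i).Nonempty) :
    edgesOf (Xset mkt M' M) i = ∅ := by
  by_contra hy
  obtain ⟨f, hf⟩ := Finset.nonempty_of_ne_empty hy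
  obtain ⟨e, he⟩ := hx
  obtain ⟨heM, henM', hepref⟩ := X_edge_facts he
  obtain ⟨hfM', hfnM, hfpref⟩ := X_edge_facts hf
  have hsE : (e.1, i) ∈ mkt.E := hM.1.1 heM
  have htE : (f.1, i) ∈ mkt.E := hM'.1.1 hfM'
  have hs := stable_cons hM' hsE henM' hepref
  have ht := stable_cons hM htE hfnM hfpref
  have hsA : e.1 ∈ assigned M i := mem_assigned heM
  have htA : f.1 ∈ assigned M' i := mem_assigned hfM'
  have h1 : mkt.prefI i f.1 ≤ mkt.prefI i e.1 := hs.2 f.1 htA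
  have h2 : mkt.prefI i e.1 ≤ mkt.prefI i f.1 := ht.2 e.1 hsA
  have heq : e.1 = f.1 := hstrictI i (le_antisymm h2 h1)
  rw [heq] at henM'
  exact henM' hfM'

/-- If `i` has an `X`-edge then it loses at least as many as it gains:
`|M(i) \ M'(i)| ≤ |M'(i) \ M(i)|`. -/
lemma sdiff_le_of_X {mkt : Market S I} {M M' : Finset (S × I)}
    (hM : IsMatching mkt M) (hM' : IsStable mkt M') {i : I}
    (hx : (edgesOf (Xset mkt M M') i).Nonempty) :
    (edgesOf (M \ M') i).card ≤ (edgesOf (M' \ M) i).card := by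
  obtain ⟨e, he⟩ := hx
  obtain ⟨heM, henM', hepref⟩ := X_edge_facts he
  have hsE : (e.1, i) ∈ mkt.E := hM.1 heM
  have hs := stable_cons hM' hsE henM' hepref
  have h1 : (edgesOf M i).card ≤ (edgesOf M' i).card := by
    rw [hs.1]; exact hM.2.2 i
  rw [edgesOf_sdiff, edgesOf_sdiff]
  have e1 := Finset.card_sdiff_add_card_inter (edgesOf M i) (edgesOf M' i)
  have e2 := Finset.card_sdiff_add_card_inter (edgesOf M' i) (edgesOf M i)
  rw [Finset.inter_comm] at e2
  omega

/-- The global injection: every edge of `M' \ M` yields a distinct preferred edge. -/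
lemma global_card_le {mkt : Market S I}
    (hstrictS : ∀ s, Function.Injective (mkt.prefS s))
    {M M' : Finset (S × I)} (hM : IsMatching mkt M) (hM' : IsMatching mkt M') :
    (M' \ M).card ≤ (Xset mkt M M').card + (Xset mkt M' M).card := by
  classical
  set P : S × I → Prop := fun e => ∀ j, (e.1, j) ∈ M → mkt.prefS e.1 e.2 < mkt.prefS e.1 j
    with hP
  have hsplit := Finset.card_filter_add_card_filter_not
    (s := M' \ M) (p := P)
  have hYeq : (M' \ M).filter P = Xset mkt M' M := by
    simp [Xset, hP]
  have hXle : ((M' \ M).filter (fun e => ¬ P e)).card ≤ (Xset mkt M M').card := by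
    apply Finset.card_le_card_of_injOn
      (fun e => if h : ∃ j, (e.1, j) ∈ M then (e.1, h.choose) else e)
    · intro e hein
      obtain ⟨hein', hnP⟩ := Finset.mem_filter.mp hein
      obtain ⟨heM', henM⟩ := Finset.mem_sdiff.mp hein'
      have hpe : (e.1, e.2) ∈ M' := by rw [Prod.mk.eta]; exact heM'
      simp only [hP, not_forall, Classical.not_imp, not_lt] at hnP
      obtain ⟨j, hjM, hjle⟩ := hnP
      have hex : ∃ j, (e.1, j) ∈ M := ⟨j, hjM⟩
      show (if h : ∃ j, (e.1, j) ∈ M then (e.1, h.choose) else e) ∈ Xset mkt M M'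
      rw [dif_pos hex]
      have hcM : (e.1, hex.choose) ∈ M := hex.choose_spec
      have hcj : hex.choose = j := partner_unique hM hcM hjM
      rw [mem_Xset]
      dsimp only
      refine ⟨hcM, ?_, ?_⟩
      · intro hmem
        have hce : hex.choose = e.2 := partner_unique hM' hmem hpe
        rw [hce, Prod.mk.eta] at hcM
        exact henM hcM
      · intro j' hj'
        have hj'e : j' = e.2 := partner_unique hM' hj' hpe
        subst hj'e
        rw [hcj]
        refine lt_of_le_of_ne hjle (fun h => ?_)
        have : j = e.2 := hstrictS e.1 h
        rw [this, Prod.mk.eta] at hjM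
        exact henM hjM
    · intro e1 h1 e2 h2 hfe
      obtain ⟨h1', h1nP⟩ := Finset.mem_filter.mp h1
      obtain ⟨h1M', -⟩ := Finset.mem_sdiff.mp h1'
      obtain ⟨h2', h2nP⟩ := Finset.mem_filter.mp h2
      obtain ⟨h2M', -⟩ := Finset.mem_sdiff.mp h2'
      simp only [hP, not_forall, Classical.not_imp, not_lt] at h1nP h2nP
      obtain ⟨j1, hj1, -⟩ := h1nP
      obtain ⟨j2, hj2, -⟩ := h2nP
      have hex1 : ∃ j, (e1.1, j) ∈ M := ⟨j1, hj1⟩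
      have hex2 : ∃ j, (e2.1, j) ∈ M := ⟨j2, hj2⟩
      dsimp only at hfe
      rw [dif_pos hex1, dif_pos hex2] at hfe
      have h11 : e1.1 = e2.1 := (Prod.mk.inj hfe).1
      have hp1 : (e1.1, e1.2) ∈ M' := by rw [Prod.mk.eta]; exact h1M'
      have hp2 : (e2.1, e2.2) ∈ M' := by rw [Prod.mk.eta]; exact h2M'
      have h22 : e1.2 = e2.2 := partner_unique hM' (h11 ▸ hp1) hp2
      exact Prod.ext h11 h22
  rw [hYeq] at hsplit
  omega

lemma card_eq_sum_edgesOf (M : Finset (S × I)) :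
    M.card = ∑ i, (edgesOf M i).card :=
  Finset.card_eq_sum_card_fiberwise (f := fun e : S × I => e.2) (t := Finset.univ)
    (by intro e _; exact mem_univ _)

/-- The key per-institution identity. -/
lemma key [Fintype S] {mkt : Market S I}
    (hstrictS : ∀ s, Function.Injective (mkt.prefS s))
    (hstrictI : ∀ i, Function.Injective (mkt.prefI i))
    {M M' : Finset (S × I)} (hM : IsStable mkt M) (hM' : IsStable mkt M') (i : I) :
    (edgesOf (Xset mkt M M') i).card + (edgesOf (Xset mkt M' M) i).card =
      (edgesOf (M' \ M) i).card := by
  have pointwise : ∀ j : I,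
      (edgesOf (Xset mkt M M') j).card + (edgesOf (Xset mkt M' M) j).card ≤
        (edgesOf (M' \ M) j).card := by
    intro j
    by_cases hx : (edgesOf (Xset mkt M M') j).Nonempty
    · have hy := dichotomy hstrictI hM hM' hx
      rw [hy]
      simp only [card_empty, add_zero]
      calc (edgesOf (Xset mkt M M') j).card
          ≤ (edgesOf (M \ M') j).card :=
            Finset.card_le_card (edgesOf_subset (Xset_subset mkt M M') j)
        _ ≤ (edgesOf (M' \ M) j).card := sdiff_le_of_X hM.1 hM' hx
    · rw [Finset.not_nonempty_iff_eq_empty] at hx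
      rw [hx]
      simp only [card_empty, zero_add]
      exact Finset.card_le_card (edgesOf_subset (Xset_subset mkt M' M) j)
  have hsums : ∑ j, ((edgesOf (Xset mkt M M') j).card + (edgesOf (Xset mkt M' M) j).card)
      = ∑ j, (edgesOf (M' \ M) j).card := by
    apply le_antisymm
    · exact Finset.sum_le_sum (fun j _ => pointwise j)
    · rw [Finset.sum_add_distrib, ← card_eq_sum_edgesOf, ← card_eq_sum_edgesOf,
        ← card_eq_sum_edgesOf]
      exact global_card_le hstrictS hM.1 hM'.1
  have := (Finset.sum_eq_sum_iff_of_le (fun j _ => pointwise j)).mp hsums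
  exact this i (mem_univ i)

end Aux

/-- Rural Hospitals: an institution undersubscribed in some stable matching is
assigned the same set of students in every stable matching. -/
theorem stmt2 [Fintype S] [Fintype I] (mkt : Market S I)
    (hstrictS : ∀ s, Function.Injective (mkt.prefS s))
    (hstrictI : ∀ i, Function.Injective (mkt.prefI i))
    (M : Finset (S × I)) (hM : IsStable mkt M) (i : I)
    (hunder : (edgesOf M i).card < mkt.q i) :
    ∀ M' : Finset (S × I), IsStable mkt M' → assigned M' i = assigned M i := by
  intro M' hM'
  have h1 := key hstrictS hstrictI hM hM' i
  have h2 := key hstrictS hstrictI hM' hM i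
  -- No Y-edge at i: otherwise i would be full under M.
  have hy0 : edgesOf (Xset mkt M' M) i = ∅ := by
    by_contra hy
    obtain ⟨f, hf⟩ := Finset.nonempty_of_ne_empty hy
    obtain ⟨hfM', hfnM, hfpref⟩ := X_edge_facts hf
    have htE : (f.1, i) ∈ mkt.E := hM'.1.1 hfM'
    have ht := stable_cons hM htE hfnM hfpref
    omega
  rw [hy0] at h1 h2
  simp only [card_empty, add_zero, zero_add] at h1 h2
  -- No X-edge at i either.
  have hx0 : edgesOf (Xset mkt M M') i = ∅ := by
    by_contra hx
    obtain ⟨e, he⟩ := Finset.nonempty_of_ne_empty hx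
    obtain ⟨heM, henM', hepref⟩ := X_edge_facts he
    have hsE : (e.1, i) ∈ mkt.E := hM.1.1 heM
    have hs := stable_cons hM' hsE henM' hepref
    -- i is full under M', but undersubscribed under M, while losing and gaining equally
    have e1 := Finset.card_sdiff_add_card_inter (edgesOf M i) (edgesOf M' i)
    have e2 := Finset.card_sdiff_add_card_inter (edgesOf M' i) (edgesOf M i)
    rw [Finset.inter_comm] at e2
    rw [edgesOf_sdiff] at h1 h2
    omega
  rw [hx0] at h1 h2
  simp only [card_empty] at h1 h2
  rw [edgesOf_sdiff] at h1 h2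
  have hsub1 : edgesOf M' i ⊆ edgesOf M i := by
    rw [← Finset.sdiff_eq_empty_iff_subset]
    exact Finset.card_eq_zero.mp h1.symm
  have hsub2 : edgesOf M i ⊆ edgesOf M' i := by
    rw [← Finset.sdiff_eq_empty_iff_subset]
    exact Finset.card_eq_zero.mp h2.symm
  have heq : edgesOf M' i = edgesOf M i := Finset.Subset.antisymm hsub1 hsub2
  unfold assigned
  rw [heq]
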